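/- Monotone motion of the extreme aggregates: let a : ℝ → ℝ be continuous, odd, nondecreasing, with a(s) > 0 for all s > 0, and A(x) = ∫_0^x a(s) ds. Let n ≥ 2, m_1, …, m_n > 0, and let x_1, …, x_n : [0,T] → ℝ be C¹ with x_1(t) < ⋯ < x_n(t) for all t, satisfying the aggregate ODE system m_i x_i'(t) = A(d_i(t) + m_i/2) − A(d_i(t) − m_i/2) with d_i(t) = ∑_{j≠i} m_j K'(x_i(t) − x_j(t)). Then for every t ∈ [0,T] the leftmost aggregate moves strictly to the right and the rightmost strictly to the left: x_1'(t) > 0 and x_n'(t) < 0; consequently t ↦ x_n(t) − x_1(t) is strictly decreasing on [0,T]. -/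

import Mathlib

open MeasureTheory

/-- The pointwise derivative `K'(x) = -(1/2) sgn(x) e^{-|x|}` (with `sgn 0 = 0`). -/
noncomputable def Kker' (x : ℝ) : ℝ := -(1/2) * Real.sign x * Real.exp (-|x|)

/-- The antiderivative `A(x) = ∫_0^x a(s) ds`. -/
noncomputable def Aanti (a : ℝ → ℝ) (x : ℝ) : ℝ := ∫ s in (0:ℝ)..x, a s

lemma Kker'_pos {y : ℝ} (hy : y < 0) : 0 < Kker' y := by
  unfold Kker'
  rw [Real.sign_of_neg hy]
  have := Real.exp_pos (-|y|)
  nlinarith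

lemma Kker'_neg {y : ℝ} (hy : 0 < y) : Kker' y < 0 := by
  unfold Kker'
  rw [Real.sign_of_pos hy]
  have := Real.exp_pos (-|y|)
  nlinarith

lemma Aanti_even (a : ℝ → ℝ) (haodd : ∀ s, a (-s) = -a s) (x : ℝ) :
    Aanti a (-x) = Aanti a x := by
  unfold Aanti
  have h := intervalIntegral.integral_comp_neg (a := (0:ℝ)) (b := x) (f := a)
  simp only [haodd, neg_zero, intervalIntegral.integral_neg] at h
  have h2 : ∫ s in (0:ℝ)..(-x), a s = -∫ s in (-x)..(0:ℝ), a s :=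
    intervalIntegral.integral_symm _ _
  rw [h2]; linarith

lemma Aanti_mono (a : ℝ → ℝ) (ha : Continuous a) (hapos : ∀ s > (0:ℝ), 0 < a s)
    {u v : ℝ} (hu : 0 ≤ u) (huv : u < v) : Aanti a u < Aanti a v := by
  have hint : ∀ p q : ℝ, IntervalIntegrable a volume p q := fun p q =>
    ha.intervalIntegrable p q
  have h : Aanti a v - Aanti a u = ∫ s in u..v, a s := by
    unfold Aanti
    rw [intervalIntegral.integral_interval_sub_left (hint 0 v) (hint 0 u)]
  have hpos : 0 < ∫ s in u..v, a s :=
    intervalIntegral.intervalIntegral_pos_of_pos_on (hint u v)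
      (fun s hs => hapos s (lt_of_le_of_lt hu hs.1)) huv
  linarith

lemma Aanti_abs_lt (a : ℝ → ℝ) (ha : Continuous a) (haodd : ∀ s, a (-s) = -a s)
    (hapos : ∀ s > (0:ℝ), 0 < a s) {u v : ℝ} (h : |u| < |v|) :
    Aanti a u < Aanti a v := by
  have h1 : Aanti a u = Aanti a |u| := by
    rcases abs_choice u with h' | h'
    · rw [h']
    · rw [h', Aanti_even a haodd]
  have h2 : Aanti a v = Aanti a |v| := by
    rcases abs_choice v with h' | h'
    · rw [h']
    · rw [h', Aanti_even a haodd]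
  rw [h1, h2]
  exact Aanti_mono a ha hapos (abs_nonneg u) h

/-- Monotone motion of the extreme aggregates: for the aggregate ODE system with a
continuous, odd, nondecreasing velocity law `a`, positive on positive reals, the leftmost
aggregate moves strictly to the right, the rightmost strictly to the left, and the total
width `x_n - x_1` is strictly decreasing on `[0,T]`. -/
theorem stmt14 (n : ℕ) (hn : 2 ≤ n) (T : ℝ) (hT : 0 < T)
    (m : Fin n → ℝ) (hm : ∀ i, 0 < m i)
    (x : Fin n → ℝ → ℝ) (hreg : ∀ i, ContDiff ℝ 1 (x i))
    (horder : ∀ t ∈ Set.Icc (0:ℝ) T, StrictMono fun i => x i t)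
    (a : ℝ → ℝ) (ha : Continuous a) (haodd : ∀ s, a (-s) = -a s)
    (hamono : Monotone a) (hapos : ∀ s > (0:ℝ), 0 < a s)
    (d : Fin n → ℝ → ℝ)
    (hd : d = fun i t => ∑ j ∈ Finset.univ.erase i, m j * Kker' (x i t - x j t))
    (hode : ∀ i, ∀ t ∈ Set.Icc (0:ℝ) T,
      m i * deriv (x i) t = Aanti a (d i t + m i / 2) - Aanti a (d i t - m i / 2)) :
    (∀ t ∈ Set.Icc (0:ℝ) T,
      0 < deriv (x ⟨0, by omega⟩) t ∧ deriv (x ⟨n - 1, by omega⟩) t < 0) ∧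
    StrictAntiOn (fun t => x ⟨n - 1, by omega⟩ t - x ⟨0, by omega⟩ t)
      (Set.Icc (0:ℝ) T) := by
  set i0 : Fin n := ⟨0, by omega⟩ with hi0
  set iN : Fin n := ⟨n - 1, by omega⟩ with hiN
  -- d i0 t > 0
  have hd0 : ∀ t ∈ Set.Icc (0:ℝ) T, 0 < d i0 t := by
    intro t ht
    rw [hd]
    apply Finset.sum_pos
    · intro j hj
      have hj0 : j ≠ i0 := (Finset.mem_erase.mp hj).1
      have hlt : i0 < j := by
        rcases lt_or_ge i0 j with h | h
        · exact h
        · exact absurd (le_antisymm (by exact Fin.mk_le_mk.mpr (Nat.zero_le _)) h) (Ne.symm hj0)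
      have := horder t ht hlt
      have hx : x i0 t - x j t < 0 := by simpa using sub_neg.mpr this
      exact mul_pos (hm j) (Kker'_pos hx)
    · refine ⟨⟨1, by omega⟩, Finset.mem_erase.mpr ⟨?_, Finset.mem_univ _⟩⟩
      intro h
      exact absurd (congrArg Fin.val h) (by simp [hi0])
  -- d iN t < 0
  have hdN : ∀ t ∈ Set.Icc (0:ℝ) T, d iN t < 0 := by
    intro t ht
    rw [hd]
    apply Finset.sum_neg
    · intro j hj
      have hjN : j ≠ iN := (Finset.mem_erase.mp hj).1
      have hlt : j < iN := by
        have : j.val ≤ n - 1 := by omega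
        rcases lt_or_eq_of_le this with h | h
        · exact Fin.lt_def.mpr h
        · exact absurd (Fin.ext h) hjN
      have := horder t ht hlt
      have hx : 0 < x iN t - x j t := sub_pos.mpr this
      exact mul_neg_of_pos_of_neg (hm j) (Kker'_neg hx)
    · refine ⟨⟨0, by omega⟩, Finset.mem_erase.mpr ⟨?_, Finset.mem_univ _⟩⟩
      intro h
      have := congrArg Fin.val h
      simp [hiN] at this
      omega
  -- derivative signs
  have hderiv : ∀ t ∈ Set.Icc (0:ℝ) T,
      0 < deriv (x i0) t ∧ deriv (x iN) t < 0 := by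
    intro t ht
    constructor
    · have h1 : 0 < m i0 * deriv (x i0) t := by
        rw [hode i0 t ht]
        have hlt : |d i0 t - m i0 / 2| < |d i0 t + m i0 / 2| := by
          have h0 := hd0 t ht
          have hm0 := hm i0
          rw [abs_of_pos (by linarith : (0:ℝ) < d i0 t + m i0 / 2), abs_lt]
          constructor <;> linarith
        linarith [Aanti_abs_lt a ha haodd hapos hlt]
      nlinarith [hm i0]
    · have h1 : m iN * deriv (x iN) t < 0 := by
        rw [hode iN t ht]
        have hlt : |d iN t + m iN / 2| < |d iN t - m iN / 2| := by
          have h0 := hdN t ht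
          have hmN := hm iN
          rw [abs_of_neg (by linarith : d iN t - m iN / 2 < 0), abs_lt]
          constructor <;> linarith
        linarith [Aanti_abs_lt a ha haodd hapos hlt]
      nlinarith [hm iN]
  refine ⟨hderiv, ?_⟩
  have hdiff : ∀ i : Fin n, Differentiable ℝ (x i) := fun i =>
    (hreg i).differentiable one_ne_zero
  apply strictAntiOn_of_deriv_neg (convex_Icc 0 T)
  · exact ((hdiff iN).continuous.sub (hdiff i0).continuous).continuousOn
  · intro t ht
    rw [interior_Icc] at ht
    have ht' : t ∈ Set.Icc (0:ℝ) T := Set.mem_Icc.mpr ⟨le_of_lt ht.1, le_of_lt ht.2⟩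
    have hdf : deriv (fun t => x iN t - x i0 t) t = deriv (x iN) t - deriv (x i0) t :=
      deriv_sub ((hdiff iN) t) ((hdiff i0) t)
    rw [hdf]
    have := hderiv t ht'
    linarith [this.1, this.2]
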